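/- arXiv:2106.14751 — 3 statements merged into one kernel-verified Lean document; each statement's English description precedes it below -/
import Mathlib

section
/- For every integer n ≥ 2, Σ_{j=1}^{n} Σ_{k=1}^{j} bel_k · S₂(j,k) · S₂(n,j) = 0, and bel_1 = 1. -/
open PowerSeries Finset

noncomputable section

/-- Composition of formal power series (the standard composition when the inner
series `f` has zero constant term, since then `coeff n (f ^ k) = 0` for `k > n`). -/
def pcomp {R : Type*} [CommRing R] (g f : PowerSeries R) : PowerSeries R :=
  PowerSeries.mk fun n =>
    ∑ k ∈ Finset.range (n + 1), PowerSeries.coeff (R := R) k g * PowerSeries.coeff (R := R) n (f ^ k)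

/-- The formal power series `log(1+t)` over `ℚ`. -/
def Lq : PowerSeries ℚ := PowerSeries.mk fun n => if n = 0 then 0 else (-1) ^ (n + 1) / n

/-- The formal power series `-log(1-t)` over `ℚ`. -/
def Labs : PowerSeries ℚ := PowerSeries.mk fun n => if n = 0 then 0 else 1 / n

/-- Signed Stirling numbers of the first kind: `(log(1+t))^k / k! = Σ S₁(n,k) tⁿ/n!`. -/
def S1 (n k : ℕ) : ℚ := n.factorial / k.factorial * PowerSeries.coeff (R := ℚ) n (Lq ^ k)

/-- Unsigned Stirling numbers of the first kind: `(-log(1-t))^k / k! = Σ |s(n,k)| tⁿ/n!`. -/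
def uS1 (n k : ℕ) : ℚ := n.factorial / k.factorial * PowerSeries.coeff (R := ℚ) n (Labs ^ k)

/-- Stirling numbers of the second kind: `(eᵗ-1)^k / k! = Σ S₂(n,k) tⁿ/n!`. -/
def S2 (n k : ℕ) : ℚ :=
  n.factorial / k.factorial * PowerSeries.coeff (R := ℚ) n ((PowerSeries.exp ℚ - 1) ^ k)

/-- `λ^(n-1) * (1)_{n,1/λ} = ∏_{j=1}^{n-1} (λ - j)`. -/
def dc (l : ℚ) (n : ℕ) : ℚ := ∏ j ∈ Finset.Ico 1 n, (l - j)

/-- Degenerate falling factorial `(1)_{n,λ} = ∏_{j=0}^{n-1} (1 - jλ)`. -/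
def ffac (l : ℚ) (n : ℕ) : ℚ := ∏ j ∈ Finset.range n, (1 - j * l)

/-- Degenerate logarithm `log_λ(1+t) = Σ_{n≥1} λ^{n-1}(1)_{n,1/λ} tⁿ/n!`. -/
def Ld (l : ℚ) : PowerSeries ℚ :=
  PowerSeries.mk fun n => if n = 0 then 0 else dc l n / n.factorial

/-- Degenerate exponential `e_λ(t) = Σ_{n≥0} (1)_{n,λ} tⁿ/n!`. -/
def Ed (l : ℚ) : PowerSeries ℚ := PowerSeries.mk fun n => ffac l n / n.factorial

/-- Degenerate Stirling numbers of the first kind. -/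
def S1d (l : ℚ) (n k : ℕ) : ℚ :=
  n.factorial / k.factorial * PowerSeries.coeff (R := ℚ) n (Ld l ^ k)

/-- Degenerate Stirling numbers of the second kind. -/
def S2d (l : ℚ) (n k : ℕ) : ℚ :=
  n.factorial / k.factorial * PowerSeries.coeff (R := ℚ) n ((Ed l - 1) ^ k)

/-- Bell numbers of the second kind: `log(1 + log(1+t)) = Σ_{n≥1} bel_n tⁿ/n!`. -/
def belNum (n : ℕ) : ℚ := n.factorial * PowerSeries.coeff (R := ℚ) n (pcomp Lq Lq)

/-- Bell numbers of the second kind via the explicit formula. -/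
def belN (m : ℕ) : ℚ :=
  ∑ k ∈ Finset.Icc 1 m, (-1) ^ (k - 1) * (k - 1).factorial * S1 m k

/-- Bell polynomials of the second kind. -/
def belPoly (n : ℕ) : Polynomial ℚ :=
  ∑ k ∈ Finset.Icc 1 n,
    Polynomial.C ((-1) ^ (k - 1) * (k - 1).factorial * S1 n k) * Polynomial.X ^ k

/-- Bell polynomials of the second kind evaluated at `x : ℚ`. -/
def belVal (x : ℚ) (m : ℕ) : ℚ :=
  ∑ k ∈ Finset.Icc 1 m, (-1) ^ (k - 1) * (k - 1).factorial * S1 m k * x ^ k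

/-- Degenerate Bell numbers of the second kind via generating function. -/
def belNumD (l : ℚ) (n : ℕ) : ℚ := n.factorial * PowerSeries.coeff (R := ℚ) n (pcomp (Ld l) (Ld l))

/-- Degenerate Bell numbers of the second kind via the explicit formula. -/
def belND (l : ℚ) (m : ℕ) : ℚ := ∑ j ∈ Finset.Icc 1 m, dc l j * S1d l m j

/-- Degenerate Bell polynomials of the second kind. -/
def belPolyD (l : ℚ) (n : ℕ) : Polynomial ℚ :=
  ∑ k ∈ Finset.Icc 1 n, Polynomial.C (dc l k * S1d l n k) * Polynomial.X ^ k

/-- `log(1+t)` as a power series over `ℚ[x]`. -/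
def LqP : PowerSeries (Polynomial ℚ) :=
  PowerSeries.mk fun n => if n = 0 then 0 else Polynomial.C ((-1) ^ (n + 1) / n : ℚ)

/-- `-log(1-t)` as a power series over `ℚ[x]`. -/
def LabsP : PowerSeries (Polynomial ℚ) :=
  PowerSeries.mk fun n => if n = 0 then 0 else Polynomial.C (1 / n : ℚ)

/-- `log(1-t)` as a power series over `ℚ[x]`. -/
def MP : PowerSeries (Polynomial ℚ) :=
  PowerSeries.mk fun n => if n = 0 then 0 else Polynomial.C (-(1 / n) : ℚ)

/-- `log_λ(1+t)` as a power series over `ℚ[x]`. -/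
def LdP (l : ℚ) : PowerSeries (Polynomial ℚ) :=
  PowerSeries.mk fun n => if n = 0 then 0 else Polynomial.C (dc l n / n.factorial)

/-- The polylogarithm `Li_k(y) = Σ_{m≥1} yᵐ/mᵏ` as a power series over `ℚ[x]`. -/
def LiP (k : ℤ) : PowerSeries (Polynomial ℚ) :=
  PowerSeries.mk fun m => if m = 0 then 0 else Polynomial.C (((m : ℚ) ^ k)⁻¹)

/-- The degenerate polylogarithm `Li_{k,λ}` as a power series over `ℚ[x]`. -/
def LidP (l : ℚ) (k : ℤ) : PowerSeries (Polynomial ℚ) :=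
  PowerSeries.mk fun m => if m = 0 then 0 else
    Polynomial.C ((-1) ^ (m - 1) * dc l m / ((m - 1).factorial * (m : ℚ) ^ k))

/-- `-x · log(1-t)` over `ℚ[x]`. -/
def innerP : PowerSeries (Polynomial ℚ) := PowerSeries.C (R := Polynomial ℚ) Polynomial.X * LabsP

/-- `-x · log_λ(1-t)` over `ℚ[x]`. -/
def innerD (l : ℚ) : PowerSeries (Polynomial ℚ) :=
  PowerSeries.C (R := Polynomial ℚ) Polynomial.X *
    PowerSeries.mk fun n => if n = 0 then 0 else
      Polynomial.C ((-1) ^ (n + 1) * dc l n / n.factorial)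

/-- Poly-Bell polynomials of the second kind via generating function. -/
def polyBellP (k : ℤ) (n : ℕ) : Polynomial ℚ :=
  (n.factorial : ℚ) • PowerSeries.coeff (R := Polynomial ℚ) n (pcomp (LiP k) innerP)

/-- Poly-Bell polynomials of the second kind via the explicit formula. -/
def belPk (k : ℤ) (n : ℕ) : Polynomial ℚ :=
  ∑ l ∈ Finset.Icc 1 n,
    Polynomial.C ((((l : ℚ) ^ (k - 1))⁻¹) * (l - 1).factorial * uS1 n l) * Polynomial.X ^ l

/-- Degenerate poly-Bell polynomials of the second kind via generating function. -/
def belDPk (l : ℚ) (k : ℤ) (n : ℕ) : Polynomial ℚ :=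
  (n.factorial : ℚ) • PowerSeries.coeff (R := Polynomial ℚ) n (pcomp (LidP l k) (innerD l))

/-- Degenerate poly-Bell polynomials of the second kind via the explicit formula. -/
def belE (l : ℚ) (k : ℤ) (m : ℕ) : Polynomial ℚ :=
  (-1 : Polynomial ℚ) ^ (m - 1) *
    ∑ j ∈ Finset.Icc 1 m,
      Polynomial.C ((((j : ℚ) ^ (k - 1))⁻¹) * dc l j * S1d l m j) * Polynomial.X ^ j

-- constant coeffs
lemma cc_Lq : constantCoeff Lq = 0 := by
  rw [← coeff_zero_eq_constantCoeff_apply]; simp [Lq]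

lemma cc_E : constantCoeff (PowerSeries.exp ℚ - 1) = 0 := by
  simp [PowerSeries.constantCoeff_exp]

lemma coeff_pow_zero_of_lt {f : PowerSeries ℚ} (hf : constantCoeff f = 0)
    {n k : ℕ} (h : n < k) : coeff n (f ^ k) = 0 := by
  have hx : (X : PowerSeries ℚ) ∣ f := X_dvd_iff.2 hf
  have : (X : PowerSeries ℚ) ^ k ∣ f ^ k := pow_dvd_pow_of_dvd hx k
  exact (X_pow_dvd_iff.1 this) n h

lemma S1_eq_zero {n k : ℕ} (h : n < k) : S1 n k = 0 := by
  simp [S1, coeff_pow_zero_of_lt cc_Lq h]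

lemma S2_eq_zero {n k : ℕ} (h : n < k) : S2 n k = 0 := by
  simp [S2, coeff_pow_zero_of_lt cc_E h]

lemma S1_zero_right {n : ℕ} (h : 1 ≤ n) : S1 n 0 = 0 := by
  simp [S1, coeff_one]
  omega

lemma S2_zero_right {n : ℕ} (h : 1 ≤ n) : S2 n 0 = 0 := by
  simp [S2, coeff_one]
  omega

lemma S1_one_one : S1 1 1 = 1 := by
  simp [S1, Lq, coeff_mk]

lemma S2_one_one : S2 1 1 = 1 := by
  simp [S2, PowerSeries.coeff_exp]

lemma d_exp : d⁄dX ℚ (PowerSeries.exp ℚ) = PowerSeries.exp ℚ := by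
  ext n
  rw [coeff_derivative, PowerSeries.coeff_exp, PowerSeries.coeff_exp]
  have : ((n+1).factorial : ℚ) = (n+1) * n.factorial := by
    rw [Nat.factorial_succ]; push_cast; ring
  simp only [eq_ratCast, Rat.cast_div, Rat.cast_one, Rat.cast_natCast] -- algebraMap ℚ ℚ
  rw [this]
  have h1 : (n.factorial : ℚ) ≠ 0 := by exact_mod_cast Nat.factorial_ne_zero n
  have h2 : ((n:ℚ)+1) ≠ 0 := by positivity
  field_simp

lemma d_Lq : d⁄dX ℚ Lq = PowerSeries.mk fun n => (-1 : ℚ) ^ n := by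
  ext n
  rw [coeff_derivative]
  simp only [Lq, coeff_mk, Nat.succ_ne_zero, if_false]
  have h2 : ((n:ℚ)+1) ≠ 0 := by positivity
  push_cast
  field_simp
  ring

lemma one_add_X_mul_dLq : (1 + X) * d⁄dX ℚ Lq = 1 := by
  rw [d_Lq]
  ext n
  rcases n with _ | m
  · rw [coeff_zero_eq_constantCoeff_apply]
    simp
  · rw [add_mul, one_mul, map_add, coeff_succ_X_mul]
    simp [coeff_mk, pow_succ]
lemma key_E (n k : ℕ) (hk : 1 ≤ k) :
    (coeff (R := ℚ) (n+1) ((PowerSeries.exp ℚ - 1) ^ k)) * (n+1)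
      = k * (coeff (R := ℚ) n ((PowerSeries.exp ℚ - 1) ^ k)
          + coeff (R := ℚ) n ((PowerSeries.exp ℚ - 1) ^ (k-1))) := by
  set E := PowerSeries.exp ℚ - 1 with hE
  have hd : d⁄dX ℚ (E ^ k) = k • (E ^ (k-1) * d⁄dX ℚ E) := by
    rw [Derivation.leibniz_pow, smul_eq_mul]
  have hdE : d⁄dX ℚ E = PowerSeries.exp ℚ := by
    rw [hE, map_sub, d_exp, Derivation.map_one_eq_zero, sub_zero]
  have hsplit : E ^ (k-1) * PowerSeries.exp ℚ = E ^ k + E ^ (k-1) := by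
    have : PowerSeries.exp ℚ = E + 1 := by rw [hE]; ring
    rw [this, mul_add, mul_one, ← pow_succ, Nat.sub_add_cancel hk]
  have := congrArg (coeff n) hd
  rw [coeff_derivative, hdE, hsplit, ← Nat.cast_smul_eq_nsmul ℚ, map_smul,
    smul_eq_mul, map_add] at this
  push_cast at this ⊢
  linarith [this]

lemma key_L (n k : ℕ) (hk : 1 ≤ k) :
    (coeff (n+1) (Lq ^ k)) * (n+1) + (coeff n (Lq ^ k)) * n
      = k * coeff n (Lq ^ (k-1)) := by
  have hd : (1 + X) * d⁄dX ℚ (Lq ^ k) = (k : ℚ) • Lq ^ (k-1) := by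
    rw [Derivation.leibniz_pow, smul_eq_mul, ← Nat.cast_smul_eq_nsmul ℚ, mul_smul_comm]
    congr 1
    rw [show (1 + X) * (Lq ^ (k-1) * d⁄dX ℚ Lq) = Lq ^ (k-1) * ((1 + X) * d⁄dX ℚ Lq) by ring,
      one_add_X_mul_dLq, mul_one]
  have := congrArg (coeff n) hd
  rw [add_mul, one_mul, map_add, map_smul, smul_eq_mul, coeff_derivative] at this
  rcases n with _ | m
  · rw [coeff_zero_eq_constantCoeff_apply, map_mul, constantCoeff_X, zero_mul] at this
    push_cast
    push_cast at this
    linarith [this]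
  · rw [coeff_succ_X_mul, coeff_derivative] at this
    push_cast
    push_cast at this
    linarith [this]
lemma S2_rec (n k : ℕ) (hk : 1 ≤ k) : S2 (n+1) k = S2 n (k-1) + k * S2 n k := by
  have key := key_E n k hk
  have hkf : (k.factorial : ℚ) = k * (k-1).factorial := by
    exact_mod_cast (Nat.mul_factorial_pred (by omega : k ≠ 0)).symm
  have hnf : ((n+1).factorial : ℚ) = (n+1) * n.factorial := by
    rw [Nat.factorial_succ]; push_cast; ring
  have h1 : (k.factorial : ℚ) ≠ 0 := by exact_mod_cast Nat.factorial_ne_zero k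
  have h2 : ((k-1).factorial : ℚ) ≠ 0 := by exact_mod_cast Nat.factorial_ne_zero (k-1)
  have h3 : (n.factorial : ℚ) ≠ 0 := by exact_mod_cast Nat.factorial_ne_zero n
  have h4 : ((n:ℚ)+1) ≠ 0 := by positivity
  simp only [S2, hnf, hkf]
  field_simp
  linear_combination key

lemma S1_rec (n k : ℕ) (hk : 1 ≤ k) : S1 (n+1) k = S1 n (k-1) - n * S1 n k := by
  have key := key_L n k hk
  have hkf : (k.factorial : ℚ) = k * (k-1).factorial := by
    exact_mod_cast (Nat.mul_factorial_pred (by omega : k ≠ 0)).symm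
  have hnf : ((n+1).factorial : ℚ) = (n+1) * n.factorial := by
    rw [Nat.factorial_succ]; push_cast; ring
  have h1 : (k.factorial : ℚ) ≠ 0 := by exact_mod_cast Nat.factorial_ne_zero k
  have h2 : ((k-1).factorial : ℚ) ≠ 0 := by exact_mod_cast Nat.factorial_ne_zero (k-1)
  have h3 : (n.factorial : ℚ) ≠ 0 := by exact_mod_cast Nat.factorial_ne_zero n
  have h4 : ((n:ℚ)+1) ≠ 0 := by positivity
  simp only [S1, hnf, hkf]
  field_simp
  linear_combination key
lemma icc_to_range (n : ℕ) (f : ℕ → ℚ) :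
    ∑ k ∈ Icc 1 n, f k = ∑ m ∈ range n, f (m+1) := by
  rw [← Finset.Ico_add_one_right_eq_Icc, Finset.sum_Ico_eq_sum_range]
  simp [add_comm]

lemma stirling_inv : ∀ j, 1 ≤ j → ∀ i, 1 ≤ i →
    (∑ k ∈ Icc 1 j, S2 j k * S1 k i) = if i = j then 1 else 0 := by
  intro j hj
  induction j, hj using Nat.le_induction with
  | base =>
      intro i hi
      simp only [Finset.Icc_self, Finset.sum_singleton, S2_one_one, one_mul]
      rcases eq_or_lt_of_le hi with h | h
      · simp [← h, S1_one_one]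
      · rw [S1_eq_zero h, if_neg (by omega)]
  | succ j hj ih =>
      intro i hi
      have hrec : ∀ k ∈ Icc 1 (j+1), S2 (j+1) k * S1 k i
          = S2 j (k-1) * S1 k i + k * S2 j k * S1 k i := by
        intro k hk
        simp only [Finset.mem_Icc] at hk
        rw [S2_rec j k hk.1]; ring
      rw [Finset.sum_congr rfl hrec, Finset.sum_add_distrib]
      have hA : (∑ k ∈ Icc 1 (j+1), S2 j (k-1) * S1 k i)
          = ∑ m ∈ range (j+1), S2 j m * (S1 m (i-1) - m * S1 m i) := by
        rw [icc_to_range]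
        refine Finset.sum_congr rfl fun m _ => ?_
        have h1 : S1 (m+1) i = S1 m (i-1) - m * S1 m i := S1_rec m i hi
        simp [h1]
      have hB : (∑ k ∈ Icc 1 (j+1), (k:ℚ) * S2 j k * S1 k i)
          = ∑ m ∈ range (j+1), (m:ℚ) * S2 j m * S1 m i := by
        rw [icc_to_range, Finset.sum_range_succ, Finset.sum_range_succ',
          S2_eq_zero (by omega : j < j+1)]
        push_cast
        simp
      rw [hA, hB]
      have hsplit : (∑ m ∈ range (j+1), S2 j m * (S1 m (i-1) - m * S1 m i))
          = (∑ m ∈ range (j+1), S2 j m * S1 m (i-1))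
            - ∑ m ∈ range (j+1), (m:ℚ) * S2 j m * S1 m i := by
        rw [← Finset.sum_sub_distrib]
        refine Finset.sum_congr rfl fun m _ => ?_
        ring
      rw [hsplit, sub_add_cancel]
      have h0 : (∑ m ∈ range (j+1), S2 j m * S1 m (i-1))
          = ∑ k ∈ Icc 1 j, S2 j k * S1 k (i-1) := by
        rw [icc_to_range, Finset.sum_range_succ', S2_zero_right hj]
        simp
      rw [h0]
      rcases eq_or_lt_of_le hi with h1 | h1
      · have : ∀ k ∈ Icc 1 j, S2 j k * S1 k (i-1) = 0 := by
          intro k hk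
          simp only [Finset.mem_Icc] at hk
          rw [← h1]
          simp [S1_zero_right hk.1]
        rw [Finset.sum_eq_zero this, if_neg (by omega)]
      · rw [ih (i-1) (by omega)]
        have : i - 1 = j ↔ i = j + 1 := by omega
        simp [this]

lemma bel_sum (j : ℕ) (hj : 1 ≤ j) :
    (∑ k ∈ Icc 1 j, belN k * S2 j k) = (-1)^(j-1) * (j-1).factorial := by
  have hext : ∀ k ∈ Icc 1 j, belN k * S2 j k
      = ∑ i ∈ Icc 1 j, (-1)^(i-1) * (i-1).factorial * S1 k i * S2 j k := by
    intro k hk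
    simp only [Finset.mem_Icc] at hk
    rw [belN, Finset.sum_mul]
    rw [Finset.sum_subset (Finset.Icc_subset_Icc_right hk.2)]
    intro i hi hni
    simp only [Finset.mem_Icc] at hi hni
    have : k < i := by omega
    rw [S1_eq_zero this]
    ring
  rw [Finset.sum_congr rfl hext, Finset.sum_comm]
  have : ∀ i ∈ Icc 1 j, (∑ k ∈ Icc 1 j, (-1:ℚ)^(i-1) * (i-1).factorial * S1 k i * S2 j k)
      = (-1)^(i-1) * (i-1).factorial * (if i = j then 1 else 0) := by
    intro i hi
    simp only [Finset.mem_Icc] at hi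
    rw [← stirling_inv j hj i hi.1, Finset.mul_sum]
    refine Finset.sum_congr rfl fun k _ => ?_
    ring
  rw [Finset.sum_congr rfl this]
  simp only [mul_ite, mul_one, mul_zero]
  rw [Finset.sum_ite_eq' (Icc 1 j) j]
  simp [hj]

lemma T_zero (n : ℕ) (hn : 2 ≤ n) :
    (∑ j ∈ Icc 1 n, (-1:ℚ)^(j-1) * (j-1).factorial * S2 n j) = 0 := by
  obtain ⟨m, rfl⟩ : ∃ m, n = m + 1 := ⟨n-1, by omega⟩
  have hm : 1 ≤ m := by omega
  have hrec : ∀ j ∈ Icc 1 (m+1), (-1:ℚ)^(j-1) * (j-1).factorial * S2 (m+1) j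
      = (-1:ℚ)^(j-1) * (j-1).factorial * S2 m (j-1)
        + (-1:ℚ)^(j-1) * ((j-1).factorial * j) * S2 m j := by
    intro j hj
    simp only [Finset.mem_Icc] at hj
    rw [S2_rec m j hj.1]; ring
  rw [Finset.sum_congr rfl hrec, Finset.sum_add_distrib]
  have hP : (∑ j ∈ Icc 1 (m+1), (-1:ℚ)^(j-1) * (j-1).factorial * S2 m (j-1))
      = ∑ i ∈ range (m+1), (-1:ℚ)^i * i.factorial * S2 m i := by
    rw [icc_to_range]
    simp
  have hQ : (∑ j ∈ Icc 1 (m+1), (-1:ℚ)^(j-1) * ((j-1).factorial * j) * S2 m j)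
      = ∑ i ∈ range (m+1), (-1:ℚ)^i * (i+1).factorial * S2 m (i+1) := by
    rw [icc_to_range]
    refine Finset.sum_congr rfl fun i _ => ?_
    simp only [Nat.add_sub_cancel, Nat.factorial_succ]
    push_cast
    ring
  rw [hP, hQ,
    Finset.sum_range_succ' (fun i => (-1:ℚ)^i * i.factorial * S2 m i),
    Finset.sum_range_succ (fun i => (-1:ℚ)^i * (i+1).factorial * S2 m (i+1)),
    S2_zero_right hm, S2_eq_zero (by omega : m < m+1)]
  simp only [mul_zero, add_zero, zero_add]
  rw [← Finset.sum_add_distrib]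
  refine Finset.sum_eq_zero fun i _ => ?_
  simp only [pow_succ]
  push_cast
  ring

theorem stmt3 (n : ℕ) (hn : 2 ≤ n) :
    (∑ j ∈ Finset.Icc 1 n, ∑ k ∈ Finset.Icc 1 j, belN k * S2 j k * S2 n j) = 0 ∧
      belN 1 = 1 := by
  constructor
  · have h1 : ∀ j ∈ Icc 1 n, (∑ k ∈ Icc 1 j, belN k * S2 j k * S2 n j)
        = (-1:ℚ)^(j-1) * (j-1).factorial * S2 n j := by
      intro j hj
      simp only [Finset.mem_Icc] at hj
      rw [← Finset.sum_mul, bel_sum j hj.1]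
    rw [Finset.sum_congr rfl h1, T_zero n hn]
  · simp [belN, S1_one_one]


end
end

section
/- For every integers n ≥ 1 and k, (-1)^(n-1) bel_{n,λ}^{(k)}(x) = Σ_{l=1}^{n} (1/l^(k-1)) (1)_{l,1/λ} λ^(l-1) x^l S_{1,λ}(n,l). -/
open PowerSeries Finset

noncomputable section

lemma sign_aux (m : ℕ) (hm : 1 ≤ m) : ((-1:ℚ))^(m-1) * (-1)^m = -1 := by
  obtain ⟨m', rfl⟩ := Nat.exists_eq_add_of_le hm
  have h1 : 1 + m' - 1 = m' := by omega
  rw [h1, ← pow_add]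
  exact Odd.neg_one_pow ⟨m', by ring⟩

lemma innerD_eq (l : ℚ) :
    innerD l = PowerSeries.C (R := Polynomial ℚ) Polynomial.X *
      PowerSeries.map Polynomial.C (-(PowerSeries.rescale (-1) (Ld l))) := by
  unfold innerD
  congr 1
  refine PowerSeries.ext fun n => ?_
  simp only [PowerSeries.coeff_mk, PowerSeries.coeff_map, map_neg,
    PowerSeries.coeff_rescale, Ld, PowerSeries.coeff_mk]
  split_ifs with h
  · simp
  · rw [← map_neg]
    congr 1
    ring

lemma coeff_innerD_pow (l : ℚ) (j n : ℕ) :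
    PowerSeries.coeff (R := Polynomial ℚ) n ((innerD l)^j)
      = Polynomial.C ((-1)^(n+j) * PowerSeries.coeff (R := ℚ) n ((Ld l)^j)) * Polynomial.X ^ j := by
  have h1 : (-(PowerSeries.rescale (-1:ℚ) (Ld l)))^j
      = PowerSeries.C (R := ℚ) ((-1)^j) * (PowerSeries.rescale (-1:ℚ)) ((Ld l)^j) := by
    rw [neg_pow, ← map_pow (PowerSeries.rescale (-1:ℚ))]
    congr 1
    rw [map_pow, map_neg, map_one]
  rw [innerD_eq, mul_pow, ← map_pow (PowerSeries.map Polynomial.C),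
    ← map_pow (PowerSeries.C (R := Polynomial ℚ)), PowerSeries.coeff_C_mul,
    PowerSeries.coeff_map, h1, PowerSeries.coeff_C_mul, PowerSeries.coeff_rescale]
  have h2 : ((-1:ℚ))^(n+j) * PowerSeries.coeff (R := ℚ) n ((Ld l)^j)
      = (-1)^j * ((-1)^n * PowerSeries.coeff (R := ℚ) n ((Ld l)^j)) := by
    rw [pow_add]; ring
  rw [h2, mul_comm]

lemma key_aux (l : ℚ) (k : ℤ) (n j : ℕ) (hn : 1 ≤ n) (hj : 1 ≤ j) :
    (-1:ℚ)^(n-1) * ((n.factorial : ℚ) * (((-1)^(j-1) * dc l j / (((j-1).factorial : ℚ) * (j:ℚ)^k)) *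
      ((-1)^(n+j) * PowerSeries.coeff (R := ℚ) n ((Ld l)^j))))
    = (((j:ℚ)^(k-1))⁻¹) * dc l j * S1d l n j := by
  have hj0 : (j : ℚ) ≠ 0 := Nat.cast_ne_zero.mpr (by omega)
  have hfac : (j : ℚ) * ((j-1).factorial : ℚ) = (j.factorial : ℚ) := by
    exact_mod_cast congrArg (Nat.cast : ℕ → ℚ) (Nat.mul_factorial_pred (by omega))
  have hsign : (-1:ℚ)^(n-1) * ((-1:ℚ)^(j-1)) * ((-1:ℚ)^(n+j)) = 1 := by
    rw [pow_add]
    calc (-1:ℚ)^(n-1) * ((-1:ℚ)^(j-1)) * ((-1:ℚ)^n * (-1:ℚ)^j)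
        = ((-1:ℚ)^(n-1) * (-1:ℚ)^n) * ((-1:ℚ)^(j-1) * (-1:ℚ)^j) := by ring
      _ = (-1) * (-1) := by rw [sign_aux n hn, sign_aux j hj]
      _ = 1 := by norm_num
  rw [S1d, zpow_sub_one₀ hj0]
  have hzk : ((j:ℚ))^k ≠ 0 := zpow_ne_zero _ hj0
  have hf1 : ((j-1).factorial : ℚ) ≠ 0 := Nat.cast_ne_zero.mpr (Nat.factorial_ne_zero _)
  have hf2 : ((j).factorial : ℚ) ≠ 0 := Nat.cast_ne_zero.mpr (Nat.factorial_ne_zero _)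
  field_simp
  rw [← hfac]
  linear_combination ((PowerSeries.coeff (R := ℚ) n ((Ld l)^j)) * dc l j *
    (j:ℚ) * ((j-1).factorial : ℚ)) * hsign

theorem stmt15 (l : ℚ) (k : ℤ) (n : ℕ) (hn : 1 ≤ n) :
    (-1 : Polynomial ℚ) ^ (n - 1) * belDPk l k n =
      ∑ m ∈ Finset.Icc 1 n,
        Polynomial.C ((((m : ℚ) ^ (k - 1))⁻¹) * dc l m * S1d l n m) *
          Polynomial.X ^ m := by
  unfold belDPk pcomp
  rw [PowerSeries.coeff_mk]
  have hsub : Finset.Icc 1 n ⊆ Finset.range (n+1) := by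
    intro x hx; simp only [Finset.mem_Icc] at hx; simp; omega
  rw [← Finset.sum_subset hsub (by
    intro x hx hx'
    simp only [Finset.mem_range] at hx
    simp only [Finset.mem_Icc] at hx'
    have : x = 0 := by omega
    subst this
    simp [LidP])]
  rw [Finset.smul_sum, Finset.mul_sum]
  apply Finset.sum_congr rfl
  intro j hj
  simp only [Finset.mem_Icc] at hj
  rw [coeff_innerD_pow]
  have hco : PowerSeries.coeff (R := Polynomial ℚ) j (LidP l k)
      = Polynomial.C ((-1) ^ (j - 1) * dc l j / (((j-1).factorial : ℚ) * (j : ℚ) ^ k)) := by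
    simp [LidP, if_neg (by omega : ¬ j = 0)]
  rw [hco, Polynomial.smul_eq_C_mul]
  have hC : (-1 : Polynomial ℚ) ^ (n - 1) = Polynomial.C ((-1:ℚ)^(n-1)) := by
    rw [map_pow, map_neg, map_one]
  rw [hC, ← key_aux l k n j hn hj.1]
  simp only [← mul_assoc]
  simp only [← map_mul]
  congr 1
  ring

end
end

section
/- For every integers n ≥ 1 and k, ((-λ)^(n-1) (1)_{n,1/λ} / n^(k-1)) x^n = Σ_{l=1}^{n} (-1)^(n-l) bel_{l,λ}^{(k)}(x) S_{2,λ}(n,l), as polynomial identity in x. -/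
open PowerSeries Finset

noncomputable section

lemma aux_zco {f : PowerSeries ℚ} (hf : constantCoeff (R := ℚ) f = 0) {n m : ℕ} (h : n < m) :
    coeff (R := ℚ) n (f ^ m) = 0 := by
  have h2 : (X : PowerSeries ℚ) ^ m ∣ f ^ m :=
    pow_dvd_pow_of_dvd (PowerSeries.X_dvd_iff.mpr hf) m
  exact PowerSeries.X_pow_dvd_iff.mp h2 n h

lemma aux_coeff_aeval_trunc (f g : PowerSeries ℚ) (N n : ℕ) :
    coeff (R := ℚ) n (Polynomial.aeval f (trunc N g)) =
      ∑ k ∈ range N, coeff (R := ℚ) k g * coeff (R := ℚ) n (f ^ k) := by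
  rw [trunc_apply, Nat.Ico_zero_eq_range]
  simp [Polynomial.aeval_monomial, PowerSeries.algebraMap_apply, coeff_C_mul]

lemma aux_zero {f : PowerSeries ℚ} (hf : constantCoeff (R := ℚ) f = 0) {P : Polynomial ℚ} {n : ℕ}
    (h : ∀ k ≤ n, P.coeff k = 0) : coeff (R := ℚ) n (Polynomial.aeval f P) = 0 := by
  have hd : (Polynomial.X : Polynomial ℚ) ^ (n+1) ∣ P :=
    Polynomial.X_pow_dvd_iff.mpr (fun d hd => h d (by omega))
  obtain ⟨Q, rfl⟩ := hd
  rw [map_mul, map_pow, Polynomial.aeval_X]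
  have h2 : (X : PowerSeries ℚ) ^ (n+1) ∣ f ^ (n+1) * Polynomial.aeval f Q :=
    dvd_mul_of_dvd_left (pow_dvd_pow_of_dvd (PowerSeries.X_dvd_iff.mpr hf) _) _
  exact PowerSeries.X_pow_dvd_iff.mp h2 n (Nat.lt_succ_self n)

lemma aux_congr {f : PowerSeries ℚ} (hf : constantCoeff (R := ℚ) f = 0) {P Q : Polynomial ℚ} {n : ℕ}
    (h : ∀ k ≤ n, P.coeff k = Q.coeff k) :
    coeff (R := ℚ) n (Polynomial.aeval f P) = coeff (R := ℚ) n (Polynomial.aeval f Q) := by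
  have h0 : coeff (R := ℚ) n (Polynomial.aeval f (P - Q)) = 0 :=
    aux_zero hf (fun k hk => by simp [h k hk])
  rw [map_sub, map_sub] at h0
  linarith

lemma aux_coeff_pcomp (g f : PowerSeries ℚ) (n : ℕ) :
    coeff (R := ℚ) n (pcomp g f) = ∑ k ∈ range (n+1), coeff (R := ℚ) k g * coeff (R := ℚ) n (f ^ k) := by
  simp [pcomp]

lemma aux_pcomp_eq (g f : PowerSeries ℚ) (n : ℕ) :
    coeff (R := ℚ) n (pcomp g f) = coeff (R := ℚ) n (Polynomial.aeval f (trunc (n+1) g)) := by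
  rw [aux_coeff_pcomp, aux_coeff_aeval_trunc]

lemma aux_pcomp_eq' {f : PowerSeries ℚ} (hf : constantCoeff (R := ℚ) f = 0) (g : PowerSeries ℚ)
    {m n : ℕ} (hmn : m ≤ n) :
    coeff (R := ℚ) m (pcomp g f) = coeff (R := ℚ) m (Polynomial.aeval f (trunc (n+1) g)) := by
  rw [aux_pcomp_eq]
  apply aux_congr hf
  intro k hk
  rw [coeff_trunc, coeff_trunc, if_pos (by omega), if_pos (by omega)]

lemma aux_pcomp_mul {f : PowerSeries ℚ} (hf : constantCoeff (R := ℚ) f = 0) (g1 g2 : PowerSeries ℚ) :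
    pcomp (g1 * g2) f = pcomp g1 f * pcomp g2 f := by
  ext n
  rw [aux_pcomp_eq]
  have h1 : coeff (R := ℚ) n (Polynomial.aeval f (trunc (n+1) (g1 * g2))) =
      coeff (R := ℚ) n (Polynomial.aeval f (trunc (n+1) g1 * trunc (n+1) g2)) := by
    apply aux_congr hf
    intro k hk
    rw [coeff_trunc, if_pos (by omega)]
    rw [coeff_mul_eq_coeff_trunc_mul_trunc g1 g2 (show k < n+1 by omega)]
    rw [← Polynomial.coe_mul, Polynomial.coeff_coe]
  rw [h1, map_mul, PowerSeries.coeff_mul, PowerSeries.coeff_mul]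
  apply Finset.sum_congr rfl
  intro p hp
  rw [Finset.HasAntidiagonal.mem_antidiagonal] at hp
  rw [← aux_pcomp_eq' hf g1 (show p.1 ≤ n by omega),
      ← aux_pcomp_eq' hf g2 (show p.2 ≤ n by omega)]

lemma aux_pcomp_one (f : PowerSeries ℚ) : pcomp 1 f = 1 := by
  ext n
  rw [aux_coeff_pcomp]
  simp [PowerSeries.coeff_one, ite_mul, Finset.sum_ite_eq']

lemma aux_pcomp_pow {f : PowerSeries ℚ} (hf : constantCoeff (R := ℚ) f = 0) (g : PowerSeries ℚ)
    (j : ℕ) : pcomp (g ^ j) f = (pcomp g f) ^ j := by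
  induction j with
  | zero => simpa using aux_pcomp_one f
  | succ j ih => rw [pow_succ, aux_pcomp_mul hf, ih, pow_succ]


variable {l : ℚ}

lemma dc_succ {n : ℕ} (hn : 1 ≤ n) : dc l (n+1) = dc l n * (l - n) :=
  Finset.prod_Ico_succ_top hn _

lemma ffac_succ (n : ℕ) : ffac l (n+1) = ffac l n * (1 - n * l) :=
  Finset.prod_range_succ _ _

lemma constE : constantCoeff (R := ℚ) (Ed l - 1) = 0 := by
  rw [← PowerSeries.coeff_zero_eq_constantCoeff_apply, map_sub]
  simp [Ed, ffac]

lemma ed_ode : (1 + C (R := ℚ) l * X) * (PowerSeries.derivative ℚ (Ed l)) = Ed l := by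
  ext n
  have hD : ∀ m : ℕ, coeff (R := ℚ) m (PowerSeries.derivative ℚ (Ed l)) = ffac l (m+1) / m.factorial := by
    intro m
    rw [PowerSeries.coeff_derivative]
    simp only [Ed, coeff_mk, Nat.factorial_succ]
    push_cast
    have h1 : ((m : ℚ) + 1) ≠ 0 := by positivity
    have h2 : ((m.factorial : ℚ)) ≠ 0 := Nat.cast_ne_zero.mpr m.factorial_ne_zero
    field_simp
  rw [add_mul, one_mul, map_add, mul_assoc, coeff_C_mul]
  cases n with
  | zero =>
    simp only [hD 0]
    have : coeff (R := ℚ) 0 (X * PowerSeries.derivative ℚ (Ed l)) = 0 := by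
      rw [PowerSeries.coeff_zero_eq_constantCoeff_apply]; simp
    rw [this]
    simp [Ed, ffac]
  | succ n =>
    rw [PowerSeries.coeff_succ_X_mul, hD (n+1), hD n]
    simp only [Ed, coeff_mk]
    rw [ffac_succ (n+1)]
    have h2 : ((n.factorial : ℚ)) ≠ 0 := Nat.cast_ne_zero.mpr n.factorial_ne_zero
    have h3 : (((n+1).factorial : ℚ)) ≠ 0 := Nat.cast_ne_zero.mpr (n+1).factorial_ne_zero
    rw [Nat.factorial_succ (n)]
    push_cast
    field_simp
    ring

lemma derivE : PowerSeries.derivative ℚ (Ed l - 1) = PowerSeries.derivative ℚ (Ed l) := by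
  rw [map_sub]
  simp

lemma rec1 (m n : ℕ) :
    (n+1 : ℚ) * coeff (R := ℚ) (n+1) ((Ed l - 1)^m) + l * n * coeff (R := ℚ) n ((Ed l - 1)^m)
      = m * coeff (R := ℚ) n ((Ed l - 1)^m) + m * coeff (R := ℚ) n ((Ed l - 1)^(m-1)) := by
  cases m with
  | zero =>
    simp only [pow_zero, Nat.cast_zero, zero_mul, add_zero]
    have h1 : coeff (R := ℚ) (n+1) (1 : PowerSeries ℚ) = 0 := by simp
    rw [h1, mul_zero, zero_add]
    rcases eq_or_ne n 0 with h | h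
    · subst h; simp
    · rw [PowerSeries.coeff_one, if_neg h, mul_zero]
  | succ m =>
    have key : (1 + C (R := ℚ) l * X) * (PowerSeries.derivative ℚ ((Ed l - 1)^(m+1)))
        = (m+1 : ℕ) • ((Ed l - 1)^(m+1) + (Ed l - 1)^m) := by
      rw [Derivation.leibniz_pow]
      have h1 : (1 + C (R := ℚ) l * X) * ((m+1 : ℕ) • ((Ed l - 1) ^ (m+1-1) • PowerSeries.derivative ℚ (Ed l - 1)))
          = (m+1 : ℕ) • ((Ed l - 1)^m * ((1 + C (R := ℚ) l * X) * PowerSeries.derivative ℚ (Ed l))) := by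
        rw [derivE]
        simp only [Nat.add_sub_cancel, smul_eq_mul, mul_smul_comm]
        ring_nf
      rw [h1, ed_ode]
      congr 1
      have : Ed l = (Ed l - 1) + 1 := by ring
      rw [this]
      ring
    have hc := congrArg (coeff (R := ℚ) n) key
    rw [add_mul, one_mul, map_add, mul_assoc, coeff_C_mul] at hc
    have hXD : coeff (R := ℚ) n (X * PowerSeries.derivative ℚ ((Ed l - 1)^(m+1)))
        = n * coeff (R := ℚ) n ((Ed l - 1)^(m+1)) := by
      cases n with
      | zero =>
        rw [PowerSeries.coeff_zero_eq_constantCoeff_apply]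
        simp
      | succ n =>
        rw [PowerSeries.coeff_succ_X_mul, PowerSeries.coeff_derivative]
        push_cast
        ring
    rw [hXD, PowerSeries.coeff_derivative, map_nsmul, map_add] at hc
    rw [nsmul_eq_mul] at hc
    push_cast at hc ⊢
    nlinarith [hc]

lemma cQ_zero : coeff (R := ℚ) 0 (Ld l) = 0 := by simp [Ld]

lemma cQ_succ (m : ℕ) :
    (m+1 : ℚ) * coeff (R := ℚ) (m+1) (Ld l) = (l - m) * coeff (R := ℚ) m (Ld l) + (if m = 0 then 1 else 0) := by
  cases m with
  | zero => simp [Ld, dc]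
  | succ m =>
    simp only [Ld, coeff_mk, if_neg (Nat.succ_ne_zero _), if_neg (Nat.succ_ne_zero (m+1))]
    rw [dc_succ (by omega), Nat.factorial_succ (m+1)]
    have h2 : (((m+1).factorial : ℚ)) ≠ 0 := Nat.cast_ne_zero.mpr (m+1).factorial_ne_zero
    push_cast
    field_simp
    ring

lemma SQ_rec (n : ℕ) :
    (n+1 : ℚ) * ∑ m ∈ range (n+2), coeff (R := ℚ) m (Ld l) * coeff (R := ℚ) (n+1) ((Ed l - 1)^m)
      = l * (1 - n) * ∑ m ∈ range (n+1), coeff (R := ℚ) m (Ld l) * coeff (R := ℚ) n ((Ed l - 1)^m)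
        + (if n = 0 then 1 else 0) := by
  rw [Finset.mul_sum]
  have step : ∀ m ∈ range (n+2),
      (n+1 : ℚ) * (coeff (R := ℚ) m (Ld l) * coeff (R := ℚ) (n+1) ((Ed l - 1)^m))
        = ((m : ℚ) - l * n) * (coeff (R := ℚ) m (Ld l) * coeff (R := ℚ) n ((Ed l - 1)^m))
          + (m : ℚ) * coeff (R := ℚ) m (Ld l) * coeff (R := ℚ) n ((Ed l - 1)^(m-1)) := by
    intro m _
    have h := rec1 (l := l) m n
    linear_combination (coeff (R := ℚ) m (Ld l)) * h
  rw [Finset.sum_congr rfl step, Finset.sum_add_distrib]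
  -- first sum : drop the top term m = n+1
  have hA : ∑ m ∈ range (n+2), ((m : ℚ) - l * n) * (coeff (R := ℚ) m (Ld l) * coeff (R := ℚ) n ((Ed l - 1)^m))
      = ∑ m ∈ range (n+1), ((m : ℚ) - l * n) * (coeff (R := ℚ) m (Ld l) * coeff (R := ℚ) n ((Ed l - 1)^m)) := by
    rw [Finset.sum_range_succ]
    rw [aux_zco constE (Nat.lt_succ_self n)]
    ring
  -- second sum : shift the index
  have hB : ∑ m ∈ range (n+2), (m : ℚ) * coeff (R := ℚ) m (Ld l) * coeff (R := ℚ) n ((Ed l - 1)^(m-1))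
      = ∑ m ∈ range (n+1), ((l - m) * coeff (R := ℚ) m (Ld l)) * coeff (R := ℚ) n ((Ed l - 1)^m)
        + (if n = 0 then 1 else 0) := by
    rw [Finset.sum_range_succ']
    simp only [Nat.cast_zero, zero_mul]
    rw [add_zero]
    have : ∀ i ∈ range (n+1),
        ((i+1 : ℕ) : ℚ) * coeff (R := ℚ) (i+1) (Ld l) * coeff (R := ℚ) n ((Ed l - 1)^(i+1-1))
          = ((l - i) * coeff (R := ℚ) i (Ld l)) * coeff (R := ℚ) n ((Ed l - 1)^i)
            + (if i = 0 then 1 else 0) * coeff (R := ℚ) n ((Ed l - 1)^i) := by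
      intro i _
      have h := cQ_succ (l := l) i
      push_cast
      try simp only [Nat.add_sub_cancel]
      linear_combination (coeff (R := ℚ) n ((Ed l - 1)^i)) * h
    rw [Finset.sum_congr rfl this, Finset.sum_add_distrib]
    congr 1
    -- ∑ (if i = 0 then 1 else 0) * coeff n ((E)^i) = if n = 0 then 1 else 0
    rw [Finset.sum_eq_single 0]
    · simp [PowerSeries.coeff_one]
    · intro b _ hb; rw [if_neg hb, zero_mul]
    · intro h; exact absurd (Finset.mem_range.mpr (by omega)) h
  rw [hA, hB]
  rw [Finset.mul_sum, ← add_assoc, ← Finset.sum_add_distrib]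
  congr 1
  apply Finset.sum_congr rfl
  intro m _
  ring

lemma SQ_eval : ∀ n : ℕ,
    ∑ m ∈ range (n+1), coeff (R := ℚ) m (Ld l) * coeff (R := ℚ) n ((Ed l - 1)^m) = if n = 1 then 1 else 0 := by
  intro n
  induction n with
  | zero => simp [cQ_zero]
  | succ n ih =>
    have h := SQ_rec (l := l) n
    rw [ih] at h
    have hne : ((n:ℚ)+1) ≠ 0 := by positivity
    rcases eq_or_ne n 0 with h0 | h0
    · subst h0
      norm_num at h ⊢
      linarith [h]
    · rw [if_neg (by omega : ¬ n + 1 = 1)]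
      rcases eq_or_ne n 1 with h1 | h1
      · subst h1
        norm_num at h ⊢
        linarith [h]
      · rw [if_neg h1, if_neg h0] at h
        have h2 : (n+1:ℚ) * ∑ m ∈ range (n+1+1), coeff (R := ℚ) m (Ld l) * coeff (R := ℚ) (n+1) ((Ed l - 1)^m) = 0 := by
          rw [show (n:ℚ)+1 = ((n:ℕ):ℚ)+1 by norm_num, h]; ring
        exact (mul_eq_zero.mp h2).resolve_left hne



lemma const_Ld : constantCoeff (R := ℚ) (Ld l) = 0 := by
  rw [← PowerSeries.coeff_zero_eq_constantCoeff_apply]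
  simp [Ld]

lemma pcomp_Ld : pcomp (Ld l) (Ed l - 1) = X := by
  ext n
  rw [aux_coeff_pcomp, SQ_eval, PowerSeries.coeff_X]

lemma delta_lemma (j n : ℕ) :
    ∑ m ∈ range (n+1), coeff (R := ℚ) m (Ld l ^ j) * coeff (R := ℚ) n ((Ed l - 1)^m)
      = if n = j then 1 else 0 := by
  have h : pcomp (Ld l ^ j) (Ed l - 1) = X ^ j := by
    rw [aux_pcomp_pow constE, pcomp_Ld]
  have hc := congrArg (coeff (R := ℚ) n) h
  rw [aux_coeff_pcomp, PowerSeries.coeff_X_pow] at hc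
  exact hc

lemma S1d_eq_zero {m j : ℕ} (h : m < j) : S1d l m j = 0 := by
  rw [S1d, aux_zco const_Ld h, mul_zero]

lemma orth {j : ℕ} (hj : 1 ≤ j) (n : ℕ) :
    ∑ m ∈ Finset.Icc 1 n, S1d l m j * S2d l n m = if n = j then 1 else 0 := by
  have hterm : ∀ m ∈ Finset.Icc 1 n, S1d l m j * S2d l n m
      = (n.factorial / j.factorial : ℚ) * (coeff (R := ℚ) m (Ld l ^ j) * coeff (R := ℚ) n ((Ed l - 1)^m)) := by
    intro m _
    rw [S1d, S2d]
    have hm : ((m.factorial : ℚ)) ≠ 0 := Nat.cast_ne_zero.mpr m.factorial_ne_zero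
    field_simp
  rw [Finset.sum_congr rfl hterm, ← Finset.mul_sum]
  have hext : ∑ m ∈ Finset.Icc 1 n, coeff (R := ℚ) m (Ld l ^ j) * coeff (R := ℚ) n ((Ed l - 1)^m)
      = ∑ m ∈ range (n+1), coeff (R := ℚ) m (Ld l ^ j) * coeff (R := ℚ) n ((Ed l - 1)^m) := by
    rw [Finset.range_eq_Ico, Finset.sum_eq_sum_Ico_succ_bot (by omega : 0 < n+1)]
    rw [aux_zco const_Ld (by omega : 0 < j), zero_mul, zero_add]
    rw [← Finset.Ico_add_one_right_eq_Icc]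
  rw [hext, delta_lemma]
  rcases eq_or_ne n j with h | h
  · subst h
    have h0 : ((n.factorial : ℚ)) ≠ 0 := Nat.cast_ne_zero.mpr n.factorial_ne_zero
    simp [div_self h0]
  · simp [h]

theorem stmt16 (l : ℚ) (k : ℤ) (n : ℕ) (hn : 1 ≤ n) :
    Polynomial.C ((-1 : ℚ) ^ (n - 1) * dc l n * (((n : ℚ) ^ (k - 1))⁻¹)) *
        (Polynomial.X : Polynomial ℚ) ^ n =
      ∑ m ∈ Finset.Icc 1 n,
        (-1 : Polynomial ℚ) ^ (n - m) * belE l k m * Polynomial.C (S2d l n m) := by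
  have hq : ∀ m ∈ Finset.Icc 1 n,
      (-1 : Polynomial ℚ) ^ (n - m) * belE l k m * Polynomial.C (S2d l n m)
        = (-1 : Polynomial ℚ) ^ (n - 1) * ∑ j ∈ Finset.Icc 1 m,
            Polynomial.C ((((j : ℚ) ^ (k-1))⁻¹) * dc l j * (S1d l m j * S2d l n m)) *
              Polynomial.X ^ j := by
    intro m hm
    rw [Finset.mem_Icc] at hm
    have hsign : (-1 : Polynomial ℚ) ^ (n - m) * (-1 : Polynomial ℚ) ^ (m - 1)
        = (-1 : Polynomial ℚ) ^ (n - 1) := by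
      rw [← pow_add]; congr 1; omega
    rw [belE]
    have key : ∀ S C2 : Polynomial ℚ,
        (-1 : Polynomial ℚ) ^ (n-m) * ((-1 : Polynomial ℚ) ^ (m-1) * S) * C2
          = (-1 : Polynomial ℚ) ^ (n-1) * (S * C2) := by
      intro S C2; rw [← hsign]; ring
    rw [key]
    congr 1
    rw [Finset.sum_mul]
    apply Finset.sum_congr rfl
    intro j _
    have ha : (((j : ℚ) ^ (k-1))⁻¹) * dc l j * S1d l m j * S2d l n m
        = (((j : ℚ) ^ (k-1))⁻¹) * dc l j * (S1d l m j * S2d l n m) := by ring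
    calc Polynomial.C ((((j : ℚ) ^ (k-1))⁻¹) * dc l j * S1d l m j) * Polynomial.X ^ j *
          Polynomial.C (S2d l n m)
        = Polynomial.C ((((j : ℚ) ^ (k-1))⁻¹) * dc l j * S1d l m j * S2d l n m) *
            Polynomial.X ^ j := by simp only [Polynomial.C_mul]; ring
      _ = _ := by rw [ha]
  rw [Finset.sum_congr rfl hq, ← Finset.mul_sum]
  have hswap : ∑ m ∈ Finset.Icc 1 n, ∑ j ∈ Finset.Icc 1 m,
        Polynomial.C ((((j : ℚ) ^ (k-1))⁻¹) * dc l j * (S1d l m j * S2d l n m)) *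
          Polynomial.X ^ j
      = ∑ j ∈ Finset.Icc 1 n, ∑ m ∈ Finset.Icc j n,
          Polynomial.C ((((j : ℚ) ^ (k-1))⁻¹) * dc l j * (S1d l m j * S2d l n m)) *
            Polynomial.X ^ j := by
    have h := Finset.sum_Ico_Ico_comm 1 (n+1)
      (fun j m => Polynomial.C ((((j : ℚ) ^ (k-1))⁻¹) * dc l j * (S1d l m j * S2d l n m)) *
          Polynomial.X ^ j)
    simp only [Finset.Ico_add_one_right_eq_Icc] at h
    exact h.symm
  rw [hswap]
  have hinner : ∀ j ∈ Finset.Icc 1 n,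
      ∑ m ∈ Finset.Icc j n,
          Polynomial.C ((((j : ℚ) ^ (k-1))⁻¹) * dc l j * (S1d l m j * S2d l n m)) *
            Polynomial.X ^ j
        = Polynomial.C ((((j : ℚ) ^ (k-1))⁻¹) * dc l j * (if n = j then 1 else 0)) *
            Polynomial.X ^ j := by
    intro j hj
    rw [Finset.mem_Icc] at hj
    have hsum : ∑ m ∈ Finset.Icc j n, S1d l m j * S2d l n m
        = ∑ m ∈ Finset.Icc 1 n, S1d l m j * S2d l n m := by
      apply Finset.sum_subset
      · intro x hx
        rw [Finset.mem_Icc] at hx ⊢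
        omega
      · intro x hx hnx
        rw [Finset.mem_Icc] at hx hnx
        rw [S1d_eq_zero (by omega), zero_mul]
    rw [show Polynomial.C ((((j : ℚ) ^ (k-1))⁻¹) * dc l j * (if n = j then 1 else 0))
        = Polynomial.C ((((j : ℚ) ^ (k-1))⁻¹) * dc l j *
            (∑ m ∈ Finset.Icc j n, S1d l m j * S2d l n m)) by rw [hsum, orth hj.1]]
    rw [Finset.mul_sum, map_sum, Finset.sum_mul]
  rw [Finset.sum_congr rfl hinner]
  rw [Finset.sum_eq_single n]
  · rw [if_pos rfl, mul_one]
    have hneg : ((-1 : Polynomial ℚ)) ^ (n-1) = Polynomial.C ((-1 : ℚ) ^ (n-1)) := by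
      rw [map_pow, map_neg, map_one]
    rw [hneg, ← mul_assoc, ← Polynomial.C_mul]
    congr 2
    ring
  · intro b _ hb
    rw [if_neg (Ne.symm hb), mul_zero, map_zero, zero_mul]
  · intro h
    exact absurd (Finset.mem_Icc.mpr ⟨hn, le_refl n⟩) h


end
end
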